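/- Let (F, η): C → C' be an exact monoidal functor between exact monoidal categories, P a power flat projective resolution of the unit 1 in C, Δ_P a diagonal map, f: P_m → 1 an m-cocycle, and ψ_f a homotopy lifting of (f, Δ_P). Then F(ψ_f) is a homotopy lifting of (F(f), Δ_{P'}), where P' = F(P) and Δ_{P'} = η⁻¹_{P,P} F(Δ_P). -/

import Mathlib

open CategoryTheory CategoryTheory.Limits MonoidalCategory

universe v v' u u'

set_option synthInstance.maxHeartbeats 1000000 in
set_option maxHeartbeats 4000000 in
/-- let `(F, η) : C → C'` be an exact monoidal functor between exact
monoidal categories, `P` a power flat projective resolution of the unit `1` of `C`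
(the tensor square `T = P ⊗ P`, with structure maps `ι, π`, is again a resolution),
`Δ` a diagonal map (given by components `Δ m i j : P m ⟶ P i ⊗ P j`), `f : P_{m'+1} ⟶ 1`
a cocycle, and `ψf` a homotopy lifting of `(f, Δ)` (with associated map `ψ` as in
equation (2)).  Then `F(ψf)` is a homotopy lifting of `(F(f), Δ')`, where
`P' = F(P)` and `Δ' = η⁻¹ ∘ F(Δ)`. -/
theorem stmt7
    (C : Type u) [Category.{v} C] [Abelian C] [MonoidalCategory C]
    (C' : Type u') [Category.{v'} C'] [Abelian C'] [MonoidalCategory C']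
    (F : C ⥤ C') [F.Monoidal]
    [PreservesFiniteLimits F] [PreservesFiniteColimits F]
    -- a projective resolution `P → 1` in `C`
    (P : ℕ → C) (hP : ∀ i, Projective (P i))
    (d : ∀ i, P (i + 1) ⟶ P i) (μP : P 0 ⟶ 𝟙_ C)
    (hdd : ∀ i, d (i + 1) ≫ d i = 0) (hdμ : d 0 ≫ μP = 0) (hepi : Epi μP)
    (hexact : ∀ i, (ShortComplex.mk (d (i + 1)) (d i) (hdd i)).Exact)
    (hexact0 : (ShortComplex.mk (d 0) μP hdμ).Exact)
    -- power flatness: the total complex `T` of `P ⊗ P` (with biproduct structure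
    -- maps `ι`, `π`) is again a resolution of `1`
    (T : ℕ → C) (dT : ∀ m, T (m + 1) ⟶ T m)
    (ι : ∀ i j m, i + j = m → (P i ⊗ P j ⟶ T m))
    (π : ∀ i j m, i + j = m → (T m ⟶ P i ⊗ P j))
    (hιπ : ∀ i j m (h : i + j = m), ι i j m h ≫ π i j m h = 𝟙 _)
    (hιπorth : ∀ i j i' j' m (h : i + j = m) (h' : i' + j' = m), (i, j) ≠ (i', j') →
      ι i j m h ≫ π i' j' m h' = 0)
    (hsum : ∀ m, ∑ i : Fin (m + 1),
      π i (m - i) m (by omega) ≫ ι i (m - i) m (by omega) = 𝟙 (T m))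
    (hdT₁ : ∀ m i j (h : i + 1 + (j + 1) = m + 1),
      ι (i + 1) (j + 1) (m + 1) h ≫ dT m =
        (d i ▷ P (j + 1)) ≫ ι i (j + 1) m (by omega) +
          ((-1 : ℤ) ^ (i + 1)) • ((P (i + 1) ◁ d j) ≫ ι (i + 1) j m (by omega)))
    (hdT₂ : ∀ m, ι 0 (m + 1) (m + 1) (by omega) ≫ dT m =
      (P 0 ◁ d m) ≫ ι 0 m m (by omega))
    (hdT₃ : ∀ m, ι (m + 1) 0 (m + 1) (by omega) ≫ dT m =
      (d m ▷ P 0) ≫ ι m 0 m (by omega))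
    (hdTdT : ∀ m, dT (m + 1) ≫ dT m = 0)
    (hdTμT : dT 0 ≫ π 0 0 0 rfl ≫ (μP ⊗ₘ μP) ≫ (λ_ (𝟙_ C)).hom = 0)
    (hTepi : Epi (π 0 0 0 rfl ≫ (μP ⊗ₘ μP) ≫ (λ_ (𝟙_ C)).hom))
    (hTexact : ∀ m, (ShortComplex.mk (dT (m + 1)) (dT m) (hdTdT m)).Exact)
    (hTexact0 : (ShortComplex.mk (dT 0)
      (π 0 0 0 rfl ≫ (μP ⊗ₘ μP) ≫ (λ_ (𝟙_ C)).hom) hdTμT).Exact)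
    -- a diagonal map `Δ : P → P ⊗ P`, lifting `1 ≅ 1 ⊗ 1`
    (Δ : ∀ m i j, i + j = m → (P m ⟶ P i ⊗ P j))
    (hΔ_chain : ∀ m i j (h : i + j = m),
      d m ≫ Δ m i j h =
        Δ (m + 1) (i + 1) j (by omega) ≫ (d i ▷ P j) +
          ((-1 : ℤ) ^ i) • (Δ (m + 1) i (j + 1) (by omega) ≫ (P i ◁ d j)))
    (hΔ_aug : Δ 0 0 0 rfl ≫ (μP ⊗ₘ μP) = μP ≫ (λ_ (𝟙_ C)).inv)
    -- the map `ψ` of equation (2): `∂(ψ) = (μ_P ⊗ 1 − 1 ⊗ μ_P) Δ_P`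
    (ψ : ∀ l, P l ⟶ P (l + 1))
    (hψ0 : ψ 0 ≫ d 0 =
      Δ 0 0 0 rfl ≫ (μP ▷ P 0) ≫ (λ_ (P 0)).hom -
        Δ 0 0 0 rfl ≫ (P 0 ◁ μP) ≫ (ρ_ (P 0)).hom)
    (hψsucc : ∀ l, ψ (l + 1) ≫ d (l + 1) + d l ≫ ψ l =
      Δ (l + 1) 0 (l + 1) (by omega) ≫ (μP ▷ P (l + 1)) ≫ (λ_ (P (l + 1))).hom -
        Δ (l + 1) (l + 1) 0 (by omega) ≫ (P (l + 1) ◁ μP) ≫ (ρ_ (P (l + 1))).hom)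
    -- a cocycle `f : P_{m'+1} ⟶ 1`
    (m' : ℕ) (f : P (m' + 1) ⟶ 𝟙_ C) (hf : d (m' + 1) ≫ f = 0)
    -- a homotopy lifting `ψf` of `(f, Δ)`: equation (1) ...
    (ψf : ∀ i j, j + m' = i → (P i ⟶ P j))
    (hψf : ∀ j, ψf (j + m' + 1) (j + 1) (by omega) ≫ d j -
        ((-1 : ℤ) ^ m') • (d (j + m') ≫ ψf (j + m') j (by omega)) =
      Δ (j + m' + 1) (m' + 1) j (by omega) ≫ (f ▷ P j) ≫ (λ_ (P j)).hom -
        ((-1 : ℤ) ^ ((m' + 1) * j)) •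
          (Δ (j + m' + 1) j (m' + 1) (by omega) ≫ (P j ◁ f) ≫ (ρ_ (P j)).hom))
    -- ... and `μ_P ψ_f ∼ (−1)^{m+1} f ψ`
    (hψf_htpy :
      (m' = 0 → ψf m' 0 (by omega) ≫ μP =
        ((-1 : ℤ) ^ (m' + 1 + 1)) • (ψ m' ≫ f)) ∧
      (∀ j' (hj : m' = j' + 1), ∃ θ : P j' ⟶ 𝟙_ C,
        ψf m' 0 (by omega) ≫ μP -
            ((-1 : ℤ) ^ (m' + 1 + 1)) • (ψ m' ≫ f) =
          eqToHom (congrArg P hj) ≫ d j' ≫ θ)) :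
    -- conclusion: `F(ψf)` is a homotopy lifting of `(F(f), Δ')`, where
    -- `Δ' = η⁻¹ ∘ F(Δ)`, `μ' = F(μ)` (composed with `F(1) ≅ 1'`), etc.
    letI P' : ℕ → C' := fun i => F.obj (P i)
    letI d' : ∀ i, P' (i + 1) ⟶ P' i := fun i => F.map (d i)
    letI μ' : P' 0 ⟶ 𝟙_ C' := F.map μP ≫ Functor.OplaxMonoidal.η F
    letI Δ' : ∀ m i j, i + j = m → (P' m ⟶ P' i ⊗ P' j) := fun m i j h =>
      F.map (Δ m i j h) ≫ Functor.OplaxMonoidal.δ F (P i) (P j)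
    letI f' : P' (m' + 1) ⟶ 𝟙_ C' := F.map f ≫ Functor.OplaxMonoidal.η F
    letI ψ' : ∀ l, P' l ⟶ P' (l + 1) := fun l => F.map (ψ l)
    letI ψf' : ∀ i j, j + m' = i → (P' i ⟶ P' j) := fun i j h => F.map (ψf i j h)
    -- equation (1) for `(F(f), Δ')`:
    (∀ j, ψf' (j + m' + 1) (j + 1) (by omega) ≫ d' j -
        ((-1 : ℤ) ^ m') • (d' (j + m') ≫ ψf' (j + m') j (by omega)) =
      Δ' (j + m' + 1) (m' + 1) j (by omega) ≫ (f' ▷ P' j) ≫ (λ_ (P' j)).hom -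
        ((-1 : ℤ) ^ ((m' + 1) * j)) •
          (Δ' (j + m' + 1) j (m' + 1) (by omega) ≫ (P' j ◁ f') ≫ (ρ_ (P' j)).hom)) ∧
    -- `ψ' = F(ψ)` satisfies equation (2) for `Δ'`:
    (ψ' 0 ≫ d' 0 =
      Δ' 0 0 0 rfl ≫ (μ' ▷ P' 0) ≫ (λ_ (P' 0)).hom -
        Δ' 0 0 0 rfl ≫ (P' 0 ◁ μ') ≫ (ρ_ (P' 0)).hom) ∧
    (∀ l, ψ' (l + 1) ≫ d' (l + 1) + d' l ≫ ψ' l =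
      Δ' (l + 1) 0 (l + 1) (by omega) ≫ (μ' ▷ P' (l + 1)) ≫ (λ_ (P' (l + 1))).hom -
        Δ' (l + 1) (l + 1) 0 (by omega) ≫ (P' (l + 1) ◁ μ') ≫ (ρ_ (P' (l + 1))).hom) ∧
    -- and `μ_{P'} F(ψ_f) ∼ (−1)^{m+1} F(f) ψ'`:
    ((m' = 0 → ψf' m' 0 (by omega) ≫ μ' =
        ((-1 : ℤ) ^ (m' + 1 + 1)) • (ψ' m' ≫ f')) ∧
      (∀ j' (hj : m' = j' + 1), ∃ θ' : P' j' ⟶ 𝟙_ C',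
        ψf' m' 0 (by omega) ≫ μ' -
            ((-1 : ℤ) ^ (m' + 1 + 1)) • (ψ' m' ≫ f') =
          eqToHom (congrArg P' hj) ≫ d' j' ≫ θ')) := by
  
  haveI : F.Additive := Functor.additive_of_preserves_binary_products F
  refine ⟨?_, ?_, ?_, ?_, ?_⟩
  · intro j
    have h := congrArg F.map (hψf j)
    rw [Functor.map_sub, Functor.map_sub] at h
    simp only [F.map_sub, Functor.map_zsmul, F.map_comp, Category.assoc] at h
    simp only [comp_whiskerRight, MonoidalCategory.whiskerLeft_comp, Category.assoc,
      Functor.OplaxMonoidal.δ_natural_left_assoc, Functor.OplaxMonoidal.δ_natural_right_assoc,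
      Functor.OplaxMonoidal.left_unitality_hom, Functor.OplaxMonoidal.right_unitality_hom]
    exact h
  · have h := congrArg F.map hψ0
    rw [Functor.map_sub] at h
    simp only [F.map_sub, F.map_comp, Category.assoc] at h
    simp only [comp_whiskerRight, MonoidalCategory.whiskerLeft_comp, Category.assoc,
      Functor.OplaxMonoidal.δ_natural_left_assoc, Functor.OplaxMonoidal.δ_natural_right_assoc,
      Functor.OplaxMonoidal.left_unitality_hom, Functor.OplaxMonoidal.right_unitality_hom]
    exact h
  · intro l
    have h := congrArg F.map (hψsucc l)
    rw [Functor.map_add, Functor.map_sub] at h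
    simp only [F.map_add, F.map_sub, F.map_comp, Category.assoc] at h
    simp only [comp_whiskerRight, MonoidalCategory.whiskerLeft_comp, Category.assoc,
      Functor.OplaxMonoidal.δ_natural_left_assoc, Functor.OplaxMonoidal.δ_natural_right_assoc,
      Functor.OplaxMonoidal.left_unitality_hom, Functor.OplaxMonoidal.right_unitality_hom]
    exact h
  · intro hm
    have h := congrArg F.map (hψf_htpy.1 hm)
    simp only [Functor.map_zsmul, F.map_comp] at h
    calc F.map (ψf m' 0 (by omega)) ≫ F.map μP ≫ Functor.OplaxMonoidal.η F
        = (F.map (ψf m' 0 (by omega)) ≫ F.map μP) ≫ Functor.OplaxMonoidal.η F := by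
          rw [Category.assoc]
      _ = (((-1 : ℤ) ^ (m' + 1 + 1)) • (F.map (ψ m') ≫ F.map f)) ≫
            Functor.OplaxMonoidal.η F := by rw [h]
      _ = ((-1 : ℤ) ^ (m' + 1 + 1)) • (F.map (ψ m') ≫ F.map f ≫
            Functor.OplaxMonoidal.η F) := by
          rw [Preadditive.zsmul_comp, Category.assoc]
  · intro j' hj
    obtain ⟨θ, hθ⟩ := hψf_htpy.2 j' hj
    refine ⟨F.map θ ≫ Functor.OplaxMonoidal.η F, ?_⟩
    have h := congrArg (fun g => F.map g ≫ Functor.OplaxMonoidal.η F) hθ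
    beta_reduce at h
    rw [Functor.map_sub] at h
    simp only [F.map_sub, Functor.map_zsmul, F.map_comp, Preadditive.sub_comp,
      Preadditive.zsmul_comp, Category.assoc, eqToHom_map] at h ⊢
    exact h
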